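/- Let H, K be real Hilbert spaces, C: H → 2^H and D: K → 2^K maximally monotone, L: H → K bounded linear, γ > 0. Define A(x,y*) = Cx × D^{-1}y* and B(x,y*) = (L*y*, −Lx) on H × K. Then for every (x,y*) ∈ H × K, H_A((x,y*), −B(x,y*)) ≥ (‖x − J_{γC}(x − γL*y*)‖² + ‖y* − J_{γD^{-1}}(y* + γLx)‖²)/γ. -/

import Mathlib

open scoped RealInnerProductSpace

variable {H : Type*} {K : Type*}
  [NormedAddCommGroup H] [InnerProductSpace ℝ H] [CompleteSpace H]
  [NormedAddCommGroup K] [InnerProductSpace ℝ K] [CompleteSpace K]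

/-- Monotonicity on a real Hilbert space. -/
def IsMonotoneH {E : Type*} [NormedAddCommGroup E] [InnerProductSpace ℝ E]
    (A : E → Set E) : Prop :=
  ∀ ⦃x x' y y'⦄, x' ∈ A x → y' ∈ A y → (0 : ℝ) ≤ ⟪x - y, x' - y'⟫

/-- Maximal monotonicity on a real Hilbert space. -/
def IsMaxMonotoneH {E : Type*} [NormedAddCommGroup E] [InnerProductSpace ℝ E]
    (A : E → Set E) : Prop :=
  IsMonotoneH A ∧
    ∀ ⦃x x'⦄, (∀ ⦃y y'⦄, y' ∈ A y → (0 : ℝ) ≤ ⟪x - y, x' - y'⟫) → x' ∈ A x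

/-- The primal-dual operator `A(x,y*) = Cx × D⁻¹y*`. -/
def opA (C : H → Set H) (D : K → Set K) : (H × K) → Set (H × K) :=
  fun p => (C p.1) ×ˢ {y : K | p.2 ∈ D y}

/-- The skew operator `B(x,y*) = (L*y*, −Lx)`. -/
noncomputable def opB (L : H →L[ℝ] K) : (H × K) → (H × K) :=
  fun p => ((ContinuousLinearMap.adjoint L) p.2, -(L p.1))

/-- The Haraux function on the product Hilbert space `H × K`. -/
noncomputable def harauxP (A : (H × K) → Set (H × K)) (x u : H × K) : EReal :=
  ⨆ (q : (H × K) × (H × K)) (_ : q.2 ∈ A q.1),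
    (((⟪x.1 - q.1.1, q.2.1 - u.1⟫ + ⟪x.2 - q.1.2, q.2.2 - u.2⟫ : ℝ)) : EReal)

/-- Primal-dual lower bound: for maximally monotone `C`, `D`, bounded linear `L`
and `γ > 0`, with `A(x,y*) = Cx × D⁻¹y*` and `B(x,y*) = (L*y*, −Lx)`,
`H_A((x,y*), −B(x,y*)) ≥ (‖x − J_{γC}(x − γL*y*)‖² + ‖y* − J_{γD⁻¹}(y* + γLx)‖²)/γ`. -/
theorem haraux_primal_dual_lower_bound
    (C : H → Set H) (D : K → Set K)
    (hC : IsMaxMonotoneH C) (hD : IsMaxMonotoneH D)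
    (L : H →L[ℝ] K) (γ : ℝ) (hγ : 0 < γ)
    (JC : H → H) (hJC : ∀ w : H, ∃ a ∈ C (JC w), w = JC w + γ • a)
    (JD : K → K) (hJD : ∀ w : K, ∃ a : K, JD w ∈ D a ∧ w = JD w + γ • a)
    (x : H) (y : K) :
    (((‖x - JC (x - γ • (ContinuousLinearMap.adjoint L) y)‖ ^ 2
        + ‖y - JD (y + γ • L x)‖ ^ 2) / γ : ℝ) : EReal)
      ≤ harauxP (opA C D) (x, y) (-(opB L (x, y))) := by
  obtain ⟨a, haC, hax⟩ := hJC (x - γ • (ContinuousLinearMap.adjoint L) y)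
  obtain ⟨a', hsD, hsy⟩ := hJD (y + γ • L x)
  set pC := JC (x - γ • (ContinuousLinearMap.adjoint L) y) with hpC
  set s := JD (y + γ • L x) with hs
  have hne : γ ≠ 0 := hγ.ne'
  have h1 : a - -((ContinuousLinearMap.adjoint L) y) = γ⁻¹ • (x - pC) := by
    have hx : x = pC + γ • a + γ • ((ContinuousLinearMap.adjoint L) y) := by
      have := hax
      rw [sub_eq_iff_eq_add] at this
      rw [this]
    rw [hx]
    match_scalars <;> field_simp <;> ring
  have h2 : a' - L x = γ⁻¹ • (y - s) := by
    have hy : y = s + γ • a' - γ • (L x) := by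
      have := hsy
      rw [add_comm] at this
      rw [← sub_eq_iff_eq_add] at this
      rw [← this]; abel
    rw [hy]
    match_scalars <;> field_simp <;> ring
  have hmem : ((a, a') : H × K) ∈ opA C D (pC, s) := ⟨haC, hsD⟩
  have hle := le_iSup₂ (f := fun (q : (H × K) × (H × K)) (_ : q.2 ∈ opA C D q.1) =>
      (((⟪((x,y) : H × K).1 - q.1.1, q.2.1 - (-(opB L (x,y))).1⟫
        + ⟪((x,y) : H × K).2 - q.1.2, q.2.2 - (-(opB L (x,y))).2⟫ : ℝ)) : EReal))
      (((pC, s), (a, a'))) hmem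
  refine le_trans ?_ hle
  have hval : (⟪x - pC, a - (-(opB L (x,y))).1⟫
      + ⟪y - s, a' - (-(opB L (x,y))).2⟫ : ℝ)
      = (‖x - pC‖ ^ 2 + ‖y - s‖ ^ 2) / γ := by
    simp only [opB, Prod.fst, Prod.snd, Prod.neg_mk, neg_neg]
    rw [h1, h2, real_inner_smul_right, real_inner_smul_right,
      real_inner_self_eq_norm_sq, real_inner_self_eq_norm_sq]
    field_simp
  exact le_of_eq (by exact_mod_cast hval.symm)
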